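/- Under the Case-C1 setup, the removal of the pair {v_2, v_3} disconnects d_2 from both sources; that is, every path from s_1 to d_2 and every path from s_2 to d_2 contains v_2 or v_3. -/

import Mathlib

open List

/-- `IsPath E p u w` : the nonempty list `p` of vertices is a directed path
from `u` to `w` with respect to the edge relation `E`. -/
def IsPath {V : Type*} (E : V → V → Prop) (p : List V) (u w : V) : Prop :=
  p ≠ [] ∧ p.head? = some u ∧ p.getLast? = some w ∧ p.Chain' E

/-- `Reaches E u w` (written `u ~> w`) : there is a directed path from `u` to `w`. -/
def Reaches {V : Type*} (E : V → V → Prop) (u w : V) : Prop :=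
  ∃ p, IsPath E p u w

/-- A two-unicast layered network: a finite directed graph, with two sources
`s1, s2` and two destinations `d1, d2` (all four distinct), vertices partitioned
into layers `1, ..., r` such that every edge goes from a layer to the next one,
the first layer is `{s1, s2}`, the last layer is `{d1, d2}`, and each source
reaches its corresponding destination. -/
structure TwoUnicastNetwork (V : Type*) [Fintype V] where
  E : V → V → Prop
  s1 : V
  s2 : V
  d1 : V
  d2 : V
  r : ℕ
  layer : V → ℕ
  layer_pos : ∀ v, 1 ≤ layer v
  layer_le : ∀ v, layer v ≤ r
  edge_layer : ∀ u w, E u w → layer w = layer u + 1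
  s_ne : s1 ≠ s2
  d_ne : d1 ≠ d2
  sd_ne : ∀ s d, (s = s1 ∨ s = s2) → (d = d1 ∨ d = d2) → s ≠ d
  first_layer : ∀ v, layer v = 1 ↔ v = s1 ∨ v = s2
  last_layer : ∀ v, layer v = r ↔ v = d1 ∨ v = d2
  conn1 : Reaches E s1 d1
  conn2 : Reaches E s2 d2

/-- `InterferesOn N S Ri srcOther v` : within the induced subgraph `G[S]`, the
node `v` causes interference on the path `Ri` : `v ∈ S`, `v ∉ Ri`, there is an
edge (inside `G[S]`) from `v` into a node of `Ri`, and there is a path from the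
other source `srcOther` to `v` lying inside `G[S]` and disjoint from `Ri`. -/
def InterferesOn {V : Type*} [Fintype V] (N : TwoUnicastNetwork V) (S : Set V)
    (Ri : List V) (srcOther : V) (v : V) : Prop :=
  v ∈ S ∧ v ∉ Ri ∧ (∃ w ∈ Ri, w ∈ S ∧ N.E v w) ∧
    ∃ q, IsPath N.E q srcOther v ∧ (∀ x ∈ q, x ∈ S) ∧ ∀ x ∈ q, x ∉ Ri

/-- `n_i(G[S])` : the number of nodes causing interference on `Ri` within the
induced subgraph `G[S]`, the interfering path coming from `srcOther`. -/
noncomputable def nInterf {V : Type*} [Fintype V] (N : TwoUnicastNetwork V)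
    (S : Set V) (Ri : List V) (srcOther : V) : ℕ :=
  {v | InterferesOn N S Ri srcOther v}.ncard

/-- `n_i^D` : the number of nodes of the other path `Rother` causing (direct)
interference on `Ri` in `G`. -/
noncomputable def nDirect {V : Type*} [Fintype V] (N : TwoUnicastNetwork V)
    (Ri Rother : List V) (srcOther : V) : ℕ :=
  {v | InterferesOn N Set.univ Ri srcOther v ∧ v ∈ Rother}.ncard

/-- The pair `(R1, R2)` (paths `s1 → d1` and `s2 → d2`) has manageable
interference: there is `S ⊇ R1 ∪ R2` with `n_1(G[S]) ≠ 1` and `n_2(G[S]) ≠ 1`. -/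
def Manageable {V : Type*} [Fintype V] (N : TwoUnicastNetwork V)
    (R1 R2 : List V) : Prop :=
  ∃ S : Set V, (∀ x ∈ R1, x ∈ S) ∧ (∀ x ∈ R2, x ∈ S) ∧
    nInterf N S R1 N.s2 ≠ 1 ∧ nInterf N S R2 N.s1 ≠ 1

/-- The pair `(R1, R2)` has `(s1,d1)`-manageable interference. -/
def Manageable1 {V : Type*} [Fintype V] (N : TwoUnicastNetwork V)
    (R1 R2 : List V) : Prop :=
  ∃ S : Set V, (∀ x ∈ R1, x ∈ S) ∧ (∀ x ∈ R2, x ∈ S) ∧ nInterf N S R1 N.s2 ≠ 1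

/-- The pair `(R1, R2)` has `(s2,d2)`-manageable interference. -/
def Manageable2 {V : Type*} [Fintype V] (N : TwoUnicastNetwork V)
    (R1 R2 : List V) : Prop :=
  ∃ S : Set V, (∀ x ∈ R1, x ∈ S) ∧ (∀ x ∈ R2, x ∈ S) ∧ nInterf N S R2 N.s1 ≠ 1

/-- Removal of the vertex `v` disconnects `a` from `b` :
every path from `a` to `b` contains `v`. -/
def CutVert {V : Type*} [Fintype V] (N : TwoUnicastNetwork V) (v a b : V) : Prop :=
  ∀ p, IsPath N.E p a b → v ∈ p



section Helpers

variable {V : Type*} {E : V → V → Prop}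

lemma isPath_cons_head {x : V} {t : List V} {a b : V}
    (h : IsPath E (x :: t) a b) : x = a := by
  have h2 := h.2.1
  simpa using h2

lemma isPath_singleton (a : V) : IsPath E [a] a a :=
  ⟨by simp, by simp, by simp, List.isChain_singleton _⟩

lemma isPath_tail {x y : V} {t : List V} {a b : V}
    (h : IsPath E (x :: y :: t) a b) : IsPath E (y :: t) y b ∧ E x y := by
  refine ⟨⟨by simp, by simp, ?_, (List.isChain_cons_cons.mp h.2.2.2).2⟩,
    (List.isChain_cons_cons.mp h.2.2.2).1⟩
  have h3 := h.2.2.1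
  simpa [List.getLast?_cons_cons] using h3

lemma isPath_last_mem : ∀ (p : List V) (a b : V), IsPath E p a b → b ∈ p
  | [], _, _, h => absurd rfl h.1
  | [x], a, b, h => by
    have h3 := h.2.2.1
    simp at h3
    simp [h3]
  | (x :: y :: t), a, b, h => by
    have := isPath_last_mem (y :: t) y b (isPath_tail h).1
    exact List.mem_cons_of_mem _ this

lemma first_cross {T : Set V} :
    ∀ (p : List V) (a b : V), IsPath E p a b → a ∉ T → (∃ x ∈ p, x ∈ T) →
    ∃ q u w, IsPath E q a u ∧ (∀ x ∈ q, x ∈ p) ∧ (∀ x ∈ q, x ∉ T) ∧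
      E u w ∧ w ∈ p ∧ w ∈ T
  | [], a, b, h, _, _ => absurd rfl h.1
  | (x :: t), a, b, h, ha, hex => by
    obtain rfl : x = a := isPath_cons_head h
    cases t with
    | nil =>
      obtain ⟨y, hy, hyT⟩ := hex
      simp at hy
      subst hy
      exact absurd hyT ha
    | cons y t' =>
      obtain ⟨hpath, hxy⟩ := isPath_tail h
      by_cases hy : y ∈ T
      · exact ⟨[x], x, y, isPath_singleton x, by simp, by simpa using ha, hxy, by simp, hy⟩
      · have hex' : ∃ z ∈ y :: t', z ∈ T := by
          obtain ⟨z, hz, hzT⟩ := hex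
          rcases List.mem_cons.mp hz with rfl | hz'
          · exact absurd hzT ha
          · exact ⟨z, hz', hzT⟩
        obtain ⟨q, u, w, hq, hqp, hqT, huw, hwp, hwT⟩ :=
          first_cross (y :: t') y b hpath hy hex'
        obtain ⟨q', rfl⟩ : ∃ q', q = y :: q' := by
          cases q with
          | nil => exact absurd rfl hq.1
          | cons z q' => exact ⟨q', by rw [isPath_cons_head hq]⟩
        refine ⟨x :: y :: q', u, w, ?_, ?_, ?_, huw, List.mem_cons_of_mem _ hwp, hwT⟩
        · exact ⟨by simp, by simp, by simpa [List.getLast?_cons_cons] using hq.2.2.1,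
            List.isChain_cons_cons.mpr ⟨hxy, hq.2.2.2⟩⟩
        · intro z hz
          rcases List.mem_cons.mp hz with rfl | hz'
          · simp
          · exact List.mem_cons_of_mem _ (hqp z hz')
        · intro z hz
          rcases List.mem_cons.mp hz with rfl | hz'
          · exact ha
          · exact hqT z hz'

lemma path_to_mem :
    ∀ (p : List V) (a b x : V), IsPath E p a b → x ∈ p →
    ∃ q, IsPath E q a x ∧ ∀ y ∈ q, y ∈ p
  | [], _, _, _, h, _ => absurd rfl h.1
  | (z :: t), a, b, x, h, hx => by
    obtain rfl : z = a := isPath_cons_head h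
    by_cases hxa : x = z
    · subst hxa
      exact ⟨[x], isPath_singleton x, by simp⟩
    · have hxt : x ∈ t := by
        rcases List.mem_cons.mp hx with rfl | h'
        · exact absurd rfl hxa
        · exact h'
      cases t with
      | nil => simp at hxt
      | cons y t' =>
        obtain ⟨hpath, hzy⟩ := isPath_tail h
        obtain ⟨q, hq, hqp⟩ := path_to_mem (y :: t') y b x hpath hxt
        obtain ⟨q', rfl⟩ : ∃ q', q = y :: q' := by
          cases q with
          | nil => exact absurd rfl hq.1
          | cons w q' => exact ⟨q', by rw [isPath_cons_head hq]⟩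
        refine ⟨z :: y :: q', ⟨by simp, by simp,
          by simpa [List.getLast?_cons_cons] using hq.2.2.1,
          List.isChain_cons_cons.mpr ⟨hzy, hq.2.2.2⟩⟩, ?_⟩
        intro w hw
        rcases List.mem_cons.mp hw with rfl | hw'
        · simp
        · exact List.mem_cons_of_mem _ (hqp w hw')

lemma path_from_mem :
    ∀ (p : List V) (a b x : V), IsPath E p a b → x ∈ p →
    ∃ q, IsPath E q x b ∧ ∀ y ∈ q, y ∈ p
  | [], _, _, _, h, _ => absurd rfl h.1
  | (z :: t), a, b, x, h, hx => by
    obtain rfl : z = a := isPath_cons_head h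
    by_cases hxa : x = z
    · subst hxa
      exact ⟨_, h, fun _ hy => hy⟩
    · have hxt : x ∈ t := by
        rcases List.mem_cons.mp hx with rfl | h'
        · exact absurd rfl hxa
        · exact h'
      cases t with
      | nil => simp at hxt
      | cons y t' =>
        obtain ⟨hpath, _⟩ := isPath_tail h
        obtain ⟨q, hq, hqp⟩ := path_from_mem (y :: t') y b x hpath hxt
        exact ⟨q, hq, fun w hw => List.mem_cons_of_mem _ (hqp w hw)⟩

lemma isPath_append {q r : List V} {a u w b : V}
    (hq : IsPath E q a u) (hr : IsPath E r w b) (huw : E u w) :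
    IsPath E (q ++ r) a b := by
  obtain ⟨hqne, hqh, hql, hqc⟩ := hq
  obtain ⟨hrne, hrh, hrl, hrc⟩ := hr
  refine ⟨by simp [hqne], ?_, ?_, ?_⟩
  · rw [List.head?_append_of_ne_nil _ hqne]
    exact hqh
  · rw [List.getLast?_append_of_ne_nil _ hrne]
    exact hrl
  · show List.IsChain E (q ++ r)
    rw [List.isChain_append]
    refine ⟨hqc, hrc, ?_⟩
    intro x hx y hy
    rw [hql] at hx
    rw [hrh] at hy
    simp at hx hy
    subst hx
    subst hy
    exact huw

lemma path_layer {V : Type*} [Fintype V] (N : TwoUnicastNetwork V) :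
    ∀ (p : List V) (a b : V), IsPath N.E p a b → ∀ x ∈ p, x = a ∨ N.layer a < N.layer x
  | [], _, _, h, _, _ => absurd rfl h.1
  | (z :: t), a, b, h, x, hx => by
    obtain rfl : z = a := isPath_cons_head h
    rcases List.mem_cons.mp hx with rfl | hxt
    · exact Or.inl rfl
    · cases t with
      | nil => simp at hxt
      | cons y t' =>
        obtain ⟨hpath, hzy⟩ := isPath_tail h
        have hlayer : N.layer y = N.layer z + 1 := N.edge_layer _ _ hzy
        rcases path_layer N (y :: t') y b hpath x hxt with rfl | hlt
        · right; omega
        · right; omega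

lemma interferesOn_mono {V : Type*} [Fintype V] {N : TwoUnicastNetwork V}
    {S S' : Set V} {Ri : List V} {src v : V} (hSS : S ⊆ S')
    (h : InterferesOn N S Ri src v) : InterferesOn N S' Ri src v := by
  obtain ⟨h1, h2, ⟨w, hw, hwS, he⟩, q, hq, hqS, hqR⟩ := h
  exact ⟨hSS h1, h2, ⟨w, hw, hSS hwS, he⟩, q, hq, fun x hx => hSS (hqS x hx), hqR⟩

end Helpers

theorem statement7 {V : Type*} [Fintype V] [DecidableEq V]
    (N : TwoUnicastNetwork V)
    (P11 P22 Ps2v1 Pvmv1 Ps1v2 : List V)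
    (v0 v1 v2 v3 v4 v5 v6 vm : V)
    (hP11 : IsPath N.E P11 N.s1 N.d1)
    (hP22 : IsPath N.E P22 N.s2 N.d2)
    (hdisj : P11.Disjoint P22)
    (hNoMan : ∀ R1 R2 : List V, IsPath N.E R1 N.s1 N.d1 → IsPath N.E R2 N.s2 N.d2 →
      R1.Disjoint R2 → ¬ Manageable N R1 R2)
    (hn1 : 2 ≤ nInterf N Set.univ P11 N.s2)
    (hn1D : nDirect N P11 P22 N.s2 = 1)
    (hn2 : nInterf N Set.univ P22 N.s1 = 1)
    (hn2D : nDirect N P22 P11 N.s1 = 0)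
    (hv3P22 : v3 ∈ P22)
    (hv3unique : {v | InterferesOn N Set.univ P11 N.s2 v ∧ v ∈ P22} = {v3})
    (hv4P11 : v4 ∈ P11)
    (hv3v4 : N.E v3 v4)
    (hv3v4unique : ∀ w ∈ P11, N.E v3 w → w = v4)
    (hv1P11 : v1 ∉ P11)
    (hv1P22 : v1 ∉ P22)
    (hv1int : InterferesOn N Set.univ P11 N.s2 v1)
    (hPs2v1 : IsPath N.E Ps2v1 N.s2 v1)
    (hPs2v1disj : Ps2v1.Disjoint P11)
    (hvmP22 : vm ∈ P22)
    (hvmPs2v1 : vm ∈ Ps2v1)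
    (hvmlast : ∀ x ∈ Ps2v1, x ∈ P22 → Ps2v1.idxOf x ≤ Ps2v1.idxOf vm)
    (hPvmv1 : IsPath N.E Pvmv1 vm v1)
    (hPvmv1suffix : Pvmv1 <:+ Ps2v1)
    (hv2Pvmv1 : v2 ∈ Pvmv1)
    (hv2ne : v2 ≠ vm)
    (hv2unique : {v | InterferesOn N Set.univ P22 N.s1 v} = {v2})
    (hv0P22 : v0 ∈ P22)
    (hv2v0 : N.E v2 v0)
    (hv2v0unique : ∀ w ∈ P22, N.E v2 w → w = v0)
    (hPs1v2 : IsPath N.E Ps1v2 N.s1 v2)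
    (hPs1v2sub : ∀ x ∈ Ps1v2, x ∈ P11 ∨ x ∈ P22 ∨ x ∈ Pvmv1)
    (hv5P11 : v5 ∈ P11)
    (hv5mem : v5 ∈ Ps1v2)
    (hv5last : ∀ x ∈ Ps1v2, x ∈ P11 → Ps1v2.idxOf x ≤ Ps1v2.idxOf v5)
    (hv6succ : ∃ k : ℕ, Ps1v2[k]? = some v5 ∧ Ps1v2[k+1]? = some v6) :
    (∀ p : List V, IsPath N.E p N.s1 N.d2 → v2 ∈ p ∨ v3 ∈ p) ∧
    (∀ p : List V, IsPath N.E p N.s2 N.d2 → v2 ∈ p ∨ v3 ∈ p) := by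
  have hl1 : N.layer N.s1 = 1 := (N.first_layer N.s1).mpr (Or.inl rfl)
  have hl2 : N.layer N.s2 = 1 := (N.first_layer N.s2).mpr (Or.inr rfl)
  have hs1P22 : N.s1 ∉ P22 := by
    intro h
    rcases path_layer N P22 N.s2 N.d2 hP22 _ h with h1 | h2
    · exact N.s_ne h1
    · omega
  have hs2P11 : N.s2 ∉ P11 := by
    intro h
    rcases path_layer N P11 N.s1 N.d1 hP11 _ h with h1 | h2
    · exact N.s_ne h1.symm
    · omega
  have hd2P22 : N.d2 ∈ P22 := isPath_last_mem _ _ _ hP22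
  have hv2int : InterferesOn N Set.univ P22 N.s1 v2 := by
    have h : v2 ∈ ({v | InterferesOn N Set.univ P22 N.s1 v} : Set V) := by
      rw [hv2unique]; rfl
    exact h
  have hv2P22 : v2 ∉ P22 := hv2int.2.1
  have hv2P11 : v2 ∉ P11 := fun h => hPs2v1disj (hPvmv1suffix.subset hv2Pvmv1) h
  have hv3P11 : v3 ∉ P11 := fun h => hdisj h hv3P22
  have hv3v2 : v3 ≠ v2 := fun h => hv2P22 (h ▸ hv3P22)
  have hBzero : ∀ S : Set V, v2 ∉ S → nInterf N S P22 N.s1 = 0 := by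
    intro S hS
    have hset : {v | InterferesOn N S P22 N.s1 v} = (∅ : Set V) := by
      ext v
      simp only [Set.mem_setOf_eq, Set.mem_empty_iff_false, iff_false]
      intro hv
      have huniv : InterferesOn N Set.univ P22 N.s1 v :=
        interferesOn_mono (Set.subset_univ S) hv
      have hveq : v = v2 := by
        have hm : v ∈ ({v | InterferesOn N Set.univ P22 N.s1 v} : Set V) := huniv
        rw [hv2unique] at hm
        exact hm
      exact hS (hveq ▸ hv.1)
    rw [nInterf, hset, Set.ncard_empty]
  set S1 : Set V := {x | x ≠ v2} with hS1def
  have hv2S1 : v2 ∉ S1 := fun h => h rfl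
  have hP11S1 : ∀ x ∈ P11, x ∈ S1 := fun x hx h => hv2P11 (h ▸ hx)
  have hP22S1 : ∀ x ∈ P22, x ∈ S1 := fun x hx h => hv2P22 (h ▸ hx)
  have hA1 : nInterf N S1 P11 N.s2 = 1 := by
    by_contra hne
    exact hNoMan P11 P22 hP11 hP22 hdisj
      ⟨S1, hP11S1, hP22S1, hne, by rw [hBzero S1 hv2S1]; omega⟩
  have hv3S1 : InterferesOn N S1 P11 N.s2 v3 := by
    obtain ⟨q, hq, hqsub⟩ := path_to_mem P22 N.s2 N.d2 v3 hP22 hv3P22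
    exact ⟨hv3v2, hv3P11, ⟨v4, hv4P11, fun h => hv2P11 (h ▸ hv4P11), hv3v4⟩,
      q, hq, fun x hx h => hv2P22 (h ▸ hqsub x hx), fun x hx h => hdisj h (hqsub x hx)⟩
  have hASet : {v | InterferesOn N S1 P11 N.s2 v} = {v3} := by
    obtain ⟨a, ha⟩ := Set.ncard_eq_one.mp hA1
    have hm : v3 ∈ ({a} : Set V) := by rw [← ha]; exact hv3S1
    have hav3 : a = v3 := (Set.mem_singleton_iff.mp hm).symm
    rw [ha, hav3]
  have half1 : ∀ p : List V, IsPath N.E p N.s1 N.d2 → v2 ∈ p ∨ v3 ∈ p := by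
    intro p hp
    by_contra hcon
    push_neg at hcon
    obtain ⟨hpv2, hpv3⟩ := hcon
    obtain ⟨q, u, w, hq, hqp, hqT, huw, hwp, hwT⟩ :=
      first_cross (T := {x | x ∈ P22}) p N.s1 N.d2 hp hs1P22
        ⟨N.d2, isPath_last_mem _ _ _ hp, hd2P22⟩
    have huq : u ∈ q := isPath_last_mem _ _ _ hq
    have hint : InterferesOn N Set.univ P22 N.s1 u :=
      ⟨trivial, hqT u huq, ⟨w, hwT, trivial, huw⟩,
        q, hq, fun _ _ => trivial, hqT⟩
    have huv2 : u = v2 := by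
      have hm : u ∈ ({v | InterferesOn N Set.univ P22 N.s1 v} : Set V) := hint
      rw [hv2unique] at hm
      exact hm
    exact hpv2 (huv2 ▸ hqp u huq)
  refine ⟨half1, ?_⟩
  intro p hp
  by_contra hcon
  push_neg at hcon
  obtain ⟨hpv2, hpv3⟩ := hcon
  have hpP11 : ∀ x ∈ p, x ∉ P11 := by
    intro x hxp hxP11
    obtain ⟨q, u, w, hq, hqp, hqT, huw, hwp, hwT⟩ :=
      first_cross (T := {x | x ∈ P11}) p N.s2 N.d2 hp hs2P11 ⟨x, hxp, hxP11⟩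
    have huq : u ∈ q := isPath_last_mem _ _ _ hq
    have hint : InterferesOn N S1 P11 N.s2 u :=
      ⟨fun h => hpv2 (h ▸ hqp u huq), hqT u huq,
        ⟨w, hwT, fun h => hv2P11 (h ▸ hwT), huw⟩,
        q, hq, fun y hy h => hpv2 (h ▸ hqp y hy), hqT⟩
    have huv3 : u = v3 := by
      have hm : u ∈ ({v | InterferesOn N S1 P11 N.s2 v} : Set V) := hint
      rw [hASet] at hm
      exact hm
    exact hpv3 (huv3 ▸ hqp u huq)
  have hdisjP : P11.Disjoint p := fun a haP hap => hpP11 a hap haP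
  set S0 : Set V := {x | x ∈ P11 ∨ x ∈ p} with hS0def
  have hS0sub : S0 ⊆ S1 := by
    intro x hx
    rcases hx with h | h
    · exact fun he => hv2P11 (he ▸ h)
    · exact fun he => hpv2 (he ▸ h)
  have hA0 : nInterf N S0 P11 N.s2 = 0 := by
    have hset : {v | InterferesOn N S0 P11 N.s2 v} = (∅ : Set V) := by
      ext v
      simp only [Set.mem_setOf_eq, Set.mem_empty_iff_false, iff_false]
      intro hv
      have h1 : InterferesOn N S1 P11 N.s2 v := interferesOn_mono hS0sub hv
      have hveq : v = v3 := by
        have hm : v ∈ ({v | InterferesOn N S1 P11 N.s2 v} : Set V) := h1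
        rw [hASet] at hm
        exact hm
      subst hveq
      rcases hv.1 with h | h
      · exact hv3P11 h
      · exact hpv3 h
    rw [nInterf, hset, Set.ncard_empty]
  have hC1 : nInterf N S0 p N.s1 = 1 := by
    by_contra hne
    exact hNoMan P11 p hP11 hp hdisjP
      ⟨S0, fun x hx => Or.inl hx, fun x hx => Or.inr hx, by rw [hA0]; omega, hne⟩
  obtain ⟨a, ha⟩ := Set.ncard_eq_one.mp hC1
  have haInt : InterferesOn N S0 p N.s1 a := by
    have hm : a ∈ ({v | InterferesOn N S0 p N.s1 v} : Set V) := by rw [ha]; rfl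
    exact hm
  obtain ⟨haS0, hap, ⟨w, hwp, hwS0, haw⟩, -⟩ := haInt
  have haP11 : a ∈ P11 := by
    rcases haS0 with h | h
    · exact h
    · exact absurd h hap
  obtain ⟨q1, hq1, hq1sub⟩ := path_to_mem P11 N.s1 N.d1 a hP11 haP11
  obtain ⟨q2, hq2, hq2sub⟩ := path_from_mem p N.s2 N.d2 w hp hwp
  have hbig : IsPath N.E (q1 ++ q2) N.s1 N.d2 := isPath_append hq1 hq2 haw
  rcases half1 (q1 ++ q2) hbig with h | h
  · rcases List.mem_append.mp h with h' | h'
    · exact hv2P11 (hq1sub _ h')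
    · exact hpv2 (hq2sub _ h')
  · rcases List.mem_append.mp h with h' | h'
    · exact hv3P11 (hq1sub _ h')
    · exact hpv3 (hq2sub _ h')
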